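/- Suppose targets i₁ ≠ i₂ satisfy |θ_{i₁}(t) - θ_{i₂}(t)| ≥ 2r + Δ for all t, with Δ > 0, and the target trajectories and the agent trajectory are 1-Lipschitz. Then the number of switches in the sequence of targets sensed by the agent (i.e., maximal intervals during which a given target i with |θ_i(t) - s(t)| < r is sensed) over [0,T] is at most ⌈2T/Δ⌉ + 1. -/

import Mathlib

theorem stmt_8 (T r Δ : ℝ) (hT : 0 < T) (hr : 0 < r) (hΔ : 0 < Δ)
    (M : ℕ) (θ : Fin M → ℝ → ℝ) (s : ℝ → ℝ)
    (hθ : ∀ i, LipschitzOnWith 1 (θ i) (Set.Icc 0 T))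
    (hs : LipschitzOnWith 1 s (Set.Icc 0 T))
    (hsep : ∀ i₁ i₂ : Fin M, i₁ ≠ i₂ → ∀ t ∈ Set.Icc 0 T,
      2 * r + Δ ≤ |θ i₁ t - θ i₂ t|)
    (k : ℕ) (t : Fin (k + 1) → ℝ) (ht : ∀ ℓ, t ℓ ∈ Set.Icc 0 T)
    (hmono : StrictMono t) (i : Fin (k + 1) → Fin M)
    (hsense : ∀ ℓ, |θ (i ℓ) (t ℓ) - s (t ℓ)| < r)
    (hswitch : ∀ ℓ : Fin k, i ℓ.castSucc ≠ i ℓ.succ) :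
    k + 1 ≤ ⌈2 * T / Δ⌉₊ + 1 := by
  -- gap between consecutive switch times is at least Δ/2
  have hgap : ∀ ℓ : Fin k, t ℓ.castSucc + Δ / 2 ≤ t ℓ.succ := by
    intro ℓ
    set a := t ℓ.castSucc with ha
    set b := t ℓ.succ with hb
    have haT := ht ℓ.castSucc
    have hbT := ht ℓ.succ
    have hab : a < b := hmono (Fin.castSucc_lt_succ : ℓ.castSucc < ℓ.succ)
    have h1 : |θ (i ℓ.castSucc) a - s a| < r := hsense ℓ.castSucc
    have h2 : |θ (i ℓ.succ) b - s b| < r := hsense ℓ.succ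
    have hsdist : |s a - s b| ≤ b - a := by
      have := hs.dist_le_mul a haT b hbT
      rw [Real.dist_eq, Real.dist_eq] at this
      rw [abs_sub_comm a b, abs_of_pos (sub_pos.2 hab)] at this; simpa using this
    have hθdist : |θ (i ℓ.succ) b - θ (i ℓ.succ) a| ≤ b - a := by
      have := (hθ (i ℓ.succ)).dist_le_mul b hbT a haT
      rw [Real.dist_eq, Real.dist_eq] at this
      rw [abs_of_pos (sub_pos.2 hab)] at this; simpa using this
    have hsep' := hsep (i ℓ.castSucc) (i ℓ.succ) (hswitch ℓ) a haT
    have key : |θ (i ℓ.castSucc) a - θ (i ℓ.succ) a| ≤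
        |θ (i ℓ.castSucc) a - s a| + |s a - s b| + |s b - θ (i ℓ.succ) b|
        + |θ (i ℓ.succ) b - θ (i ℓ.succ) a| := by
      calc |θ (i ℓ.castSucc) a - θ (i ℓ.succ) a|
          ≤ |θ (i ℓ.castSucc) a - s b| + |s b - θ (i ℓ.succ) a| := abs_sub_le _ _ _
        _ ≤ (|θ (i ℓ.castSucc) a - s a| + |s a - s b|)
            + (|s b - θ (i ℓ.succ) b| + |θ (i ℓ.succ) b - θ (i ℓ.succ) a|) :=
            add_le_add (abs_sub_le _ _ _) (abs_sub_le _ _ _)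
        _ = _ := by ring
    rw [abs_sub_comm (s b)] at key
    linarith
  -- accumulation: t m ≥ t 0 + m * (Δ/2)
  have hacc : ∀ m : ℕ, ∀ hm : m ≤ k, t 0 + m * (Δ / 2) ≤ t ⟨m, by omega⟩ := by
    intro m
    induction m with
    | zero => intro _; simp
    | succ n ih =>
      intro hm
      have hn : n ≤ k := by omega
      have hlt : n < k := by omega
      have := hgap ⟨n, hlt⟩
      have hcs : (⟨n, hlt⟩ : Fin k).castSucc = (⟨n, by omega⟩ : Fin (k+1)) := rfl
      have hsu : (⟨n, hlt⟩ : Fin k).succ = (⟨n+1, by omega⟩ : Fin (k+1)) := rfl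
      rw [hcs, hsu] at this
      have := ih hn
      push_cast
      linarith
  have hfin := hacc k le_rfl
  have h0 : (0:ℝ) ≤ t 0 := (ht 0).1
  have hT' : t ⟨k, by omega⟩ ≤ T := (ht _).2
  have hk : (k : ℝ) * (Δ / 2) ≤ T := by linarith
  have hk2 : (k : ℝ) ≤ 2 * T / Δ := by
    rw [le_div_iff₀ hΔ]
    linarith
  have : k ≤ ⌈2 * T / Δ⌉₊ := by
    exact_mod_cast hk2.trans (Nat.le_ceil _)
  omega
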